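/- For any n-qubit unitary U and T ⊆ [n] with |T| = k, the distance from U to the set of junta unitaries on T satisfies dist(U, J_T) = √(1 − ‖Tr_{T̄}U‖_*/2ⁿ), where ‖·‖_* is the nuclear norm and J_T is the set of unitaries of the form V_T ⊗ I_{T̄}. -/

import Mathlib

open scoped Matrix

open scoped Kronecker

/-- Partial trace over the second tensor factor. -/
noncomputable def ptr {α β : Type*} [Fintype β] (U : Matrix (α × β) (α × β) ℂ) :
    Matrix α α ℂ :=
  Matrix.of fun a a' => ∑ b : β, U (a, b) (a', b)

/-- The nuclear norm (sum of singular values) of a square complex matrix. -/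
noncomputable def nuclearNorm {ι : Type*} [Fintype ι] [DecidableEq ι]
    (A : Matrix ι ι ℂ) : ℝ :=
  ∑ i, Real.sqrt ((Matrix.isHermitian_conjTranspose_mul_self A).eigenvalues i)

noncomputable def colE {ι : Type*} [Fintype ι] (X : Matrix ι ι ℂ) (j : ι) :
    EuclideanSpace ℂ ι := WithLp.toLp 2 (fun a => X a j)

private lemma inner_col {ι : Type*} [Fintype ι] (X Y : Matrix ι ι ℂ) (i j : ι) :
    (inner ℂ (colE X i) (colE Y j) : ℂ) = (Xᴴ * Y) i j := by
  simp [colE, PiLp.inner_apply, Matrix.mul_apply, Matrix.conjTranspose_apply, RCLike.inner_apply]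
  exact Finset.sum_congr rfl fun _ _ => mul_comm _ _

private lemma norm_col {ι : Type*} [Fintype ι] (X : Matrix ι ι ℂ) {j : ι} {c : ℝ}
    (h : (Xᴴ * X) j j = (c : ℂ)) :
    ‖colE X j‖ = Real.sqrt c := by
  have h2 := inner_self_eq_norm_sq_to_K (𝕜 := ℂ) (x := colE X j)
  rw [inner_col, h] at h2
  have h3 : ‖colE X j‖ ^ 2 = c := by
    have h4 : ((‖colE X j‖ ^ 2 : ℝ) : ℂ) = ((c : ℝ) : ℂ) := by push_cast; exact h2.symm
    exact_mod_cast h4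
  rw [← h3, Real.sqrt_sq (norm_nonneg _)]

private lemma key {ι : Type*} [Fintype ι] [DecidableEq ι] (A : Matrix ι ι ℂ) :
    (∃ V ∈ Matrix.unitaryGroup ι ℂ, Matrix.trace (Aᴴ * V) = (nuclearNorm A : ℂ)) ∧
    ∀ V ∈ Matrix.unitaryGroup ι ℂ, ‖Matrix.trace (Aᴴ * V)‖ ≤ nuclearNorm A := by
  classical
  have hH := Matrix.isHermitian_conjTranspose_mul_self A
  set lam : ι → ℝ := hH.eigenvalues with hlam
  have hlam0 : ∀ i, 0 ≤ lam i := fun i => Matrix.eigenvalues_conjTranspose_mul_self_nonneg A i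
  set P : Matrix ι ι ℂ := (hH.eigenvectorUnitary : Matrix ι ι ℂ) with hPdef
  have hPmem : P ∈ Matrix.unitaryGroup ι ℂ := hH.eigenvectorUnitary.2
  have hdiag : Pᴴ * (Aᴴ * A) * P = Matrix.diagonal fun i => (lam i : ℂ) := by
    have := hH.conjStarAlgAut_star_eigenvectorUnitary
    rw [Unitary.conjStarAlgAut_star_apply] at this
    simp [Matrix.star_eq_conjTranspose, Function.comp] at this
    exact this
  set M : Matrix ι ι ℂ := A * P with hMdef
  have hMM : Mᴴ * M = Matrix.diagonal fun i => (lam i : ℂ) := by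
    rw [hMdef, Matrix.conjTranspose_mul, ← hdiag]
    simp [Matrix.mul_assoc]
  have hnormM : ∀ j, ‖colE M j‖ = Real.sqrt (lam j) := by
    intro j
    exact norm_col M (by rw [hMM, Matrix.diagonal_apply_eq])
  have hcolzero : ∀ j, lam j = 0 → colE M j = 0 := by
    intro j hj
    have := hnormM j
    rw [hj, Real.sqrt_zero, norm_eq_zero] at this
    exact this
  -- the normalized nonzero columns of M form an orthonormal family
  set s : Set ι := {j | lam j ≠ 0} with hsdef
  set v : ι → EuclideanSpace ℂ ι := fun j => ((Real.sqrt (lam j) : ℂ))⁻¹ • colE M j with hvdef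
  have hinnerM : ∀ i j, (inner ℂ (colE M i) (colE M j) : ℂ)
      = if i = j then (lam i : ℂ) else 0 := by
    intro i j
    rw [inner_col, hMM]
    by_cases h : i = j
    · subst h; simp [Matrix.diagonal_apply_eq]
    · simp [Matrix.diagonal_apply_ne _ h, h]
  have hv : Orthonormal ℂ (s.domRestrict v) := by
    rw [orthonormal_iff_ite]
    rintro ⟨i, hi⟩ ⟨j, hj⟩
    simp only [Set.domRestrict_apply, hvdef, inner_smul_left, inner_smul_right, hinnerM, map_inv₀,
      Complex.conj_ofReal]
    by_cases h : i = j
    · subst h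
      simp only [if_pos rfl, Subtype.mk.injEq]
      have hjne : lam i ≠ 0 := hi
      have hs0 : (Real.sqrt (lam i) : ℂ) ≠ 0 := by
        simpa using Real.sqrt_ne_zero'.mpr (lt_of_le_of_ne (hlam0 i) (Ne.symm hjne))
      have hms : (Real.sqrt (lam i) : ℂ) * Real.sqrt (lam i) = (lam i : ℂ) := by
        rw [← Complex.ofReal_mul, Real.mul_self_sqrt (hlam0 i)]
      field_simp
      simp only [if_true, mul_one]
      rw [sq]
      exact hms.symm
    · have : (⟨i, hi⟩ : s) ≠ ⟨j, hj⟩ := by simpa using h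
      simp [h, this]
  obtain ⟨b, hb⟩ := hv.exists_orthonormalBasis_extension_of_card_eq
    (by simp [finrank_euclideanSpace])
  -- build the unitary W from b
  set W : Matrix ι ι ℂ := Matrix.of fun a j => b j a with hWdef
  have hcolW : ∀ j, colE W j = b j := fun j => rfl
  have hWmem : W ∈ Matrix.unitaryGroup ι ℂ := by
    rw [Matrix.mem_unitaryGroup_iff']
    ext j k
    have := (orthonormal_iff_ite.mp b.orthonormal) j k
    rw [Matrix.star_eq_conjTranspose, ← inner_col, hcolW, hcolW, this]
    simp [Matrix.one_apply]
  have hnuc : nuclearNorm A = ∑ j, Real.sqrt (lam j) := rfl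
  constructor
  · -- existence of the maximizer
    set V0 : Matrix ι ι ℂ := W * Pᴴ with hV0def
    have hV0mem : V0 ∈ Matrix.unitaryGroup ι ℂ :=
      mul_mem hWmem (by rw [← Matrix.star_eq_conjTranspose]; exact Unitary.star_mem hPmem)
    refine ⟨V0, hV0mem, ?_⟩
    have h1 : Matrix.trace (Aᴴ * V0) = Matrix.trace (Mᴴ * W) := by
      rw [hV0def, ← Matrix.mul_assoc, Matrix.trace_mul_cycle, hMdef, Matrix.conjTranspose_mul]
    have h3 : ∀ j, (Mᴴ * W) j j = (Real.sqrt (lam j) : ℂ) := by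
      intro j
      rw [← inner_col, hcolW]
      by_cases hj : lam j = 0
      · rw [hcolzero j hj, hj]
        simp
      · rw [hb j hj]
        simp only [hvdef, inner_smul_right, hinnerM, if_pos rfl, if_true, map_inv₀]
        have hs0 : (Real.sqrt (lam j) : ℂ) ≠ 0 := by
          simpa using Real.sqrt_ne_zero'.mpr (lt_of_le_of_ne (hlam0 j) (Ne.symm hj))
        have hms : (lam j : ℂ) = (Real.sqrt (lam j) : ℂ) * Real.sqrt (lam j) := by
          rw [← Complex.ofReal_mul, Real.mul_self_sqrt (hlam0 j)]
        rw [hms, inv_mul_cancel_left₀ hs0]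
      
    rw [h1, hnuc, Matrix.trace]
    push_cast
    exact Finset.sum_congr rfl fun j _ => h3 j
  · -- the upper bound
    intro V hV
    set Q : Matrix ι ι ℂ := V * P with hQdef
    have hQmem : Q ∈ Matrix.unitaryGroup ι ℂ := mul_mem hV hPmem
    have hPP : P * Pᴴ = 1 := by
      rw [← Matrix.star_eq_conjTranspose]; exact Matrix.mem_unitaryGroup_iff.mp hPmem
    have h1 : Matrix.trace (Aᴴ * V) = Matrix.trace (Mᴴ * Q) := by
      have e : Mᴴ * Q = Pᴴ * (Aᴴ * V * P) := by
        rw [hMdef, hQdef, Matrix.conjTranspose_mul]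
        simp [Matrix.mul_assoc]
      rw [e, Matrix.trace_mul_comm Pᴴ, Matrix.mul_assoc (Aᴴ * V) P Pᴴ, hPP, Matrix.mul_one]
    have hQcol : ∀ j, ‖colE Q j‖ = 1 := by
      intro j
      have hq : (Qᴴ * Q) j j = ((1 : ℝ) : ℂ) := by
        rw [← Matrix.star_eq_conjTranspose, Matrix.mem_unitaryGroup_iff'.mp hQmem]
        simp [Matrix.one_apply]
      simpa using norm_col Q hq
    have hterm : ∀ j, ‖(Mᴴ * Q) j j‖ ≤ Real.sqrt (lam j) := by
      intro j
      rw [← inner_col]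
      calc ‖(inner ℂ (colE M j) (colE Q j) : ℂ)‖ ≤ ‖colE M j‖ * ‖colE Q j‖ :=
            norm_inner_le_norm _ _
        _ = Real.sqrt (lam j) := by rw [hnormM, hQcol, mul_one]
    rw [h1, hnuc, Matrix.trace]
    calc ‖∑ j, Matrix.diag (Mᴴ * Q) j‖ ≤ ∑ j, ‖(Mᴴ * Q) j j‖ := by
          exact (norm_sum_le _ _).trans (le_of_eq (by simp [Matrix.diag]))
      _ ≤ ∑ j, Real.sqrt (lam j) := Finset.sum_le_sum fun j _ => hterm j

private lemma trace_kron {α β : Type*} [Fintype α] [Fintype β] [DecidableEq β]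
    (U : Matrix (α × β) (α × β) ℂ) (V : Matrix α α ℂ) :
    Matrix.trace (Uᴴ * (V ⊗ₖ (1 : Matrix β β ℂ))) = Matrix.trace ((ptr U)ᴴ * V) := by
  simp only [Matrix.trace, Matrix.diag, Matrix.mul_apply, Matrix.conjTranspose_apply,
    Matrix.kroneckerMap_apply, ptr, Matrix.of_apply, Matrix.one_apply, map_sum,
    Fintype.sum_prod_type, mul_ite, mul_one, mul_zero, Finset.sum_ite_eq', Finset.mem_univ,
    if_true, Finset.sum_mul]
  simp only [star_sum, Finset.sum_mul]
  exact Finset.sum_congr rfl fun a _ => Finset.sum_comm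

theorem stmt13 (n k : ℕ) (T : Finset (Fin n)) (hT : T.card = k)
    (U : Matrix ((↥T → Fin 2) × (↥Tᶜ → Fin 2)) ((↥T → Fin 2) × (↥Tᶜ → Fin 2)) ℂ)
    (hU : U ∈ Matrix.unitaryGroup ((↥T → Fin 2) × (↥Tᶜ → Fin 2)) ℂ) :
    sInf {r : ℝ | ∃ VT ∈ Matrix.unitaryGroup (↥T → Fin 2) ℂ,
        r = Real.sqrt (1 - ‖(Matrix.trace
              (Uᴴ * (VT ⊗ₖ (1 : Matrix (↥Tᶜ → Fin 2) (↥Tᶜ → Fin 2) ℂ))))‖ / (2 ^ n : ℝ))}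
      = Real.sqrt (1 - nuclearNorm (ptr U) / (2 ^ n : ℝ)) := by
  classical
  set A := ptr U with hA
  set N := nuclearNorm A with hN
  have hN0 : 0 ≤ N := Finset.sum_nonneg fun i _ => Real.sqrt_nonneg _
  obtain ⟨⟨V0, hV0u, hV0tr⟩, hub⟩ := key A
  have hmem : Real.sqrt (1 - N / (2 ^ n : ℝ)) ∈ {r : ℝ | ∃ VT ∈ Matrix.unitaryGroup (↥T → Fin 2) ℂ,
      r = Real.sqrt (1 - ‖(Matrix.trace
            (Uᴴ * (VT ⊗ₖ (1 : Matrix (↥Tᶜ → Fin 2) (↥Tᶜ → Fin 2) ℂ))))‖ / (2 ^ n : ℝ))} := by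
    refine ⟨V0, hV0u, ?_⟩
    rw [trace_kron, ← hA, hV0tr, Complex.norm_real, Real.norm_of_nonneg hN0]
  have hlb : ∀ r ∈ {r : ℝ | ∃ VT ∈ Matrix.unitaryGroup (↥T → Fin 2) ℂ,
      r = Real.sqrt (1 - ‖(Matrix.trace
            (Uᴴ * (VT ⊗ₖ (1 : Matrix (↥Tᶜ → Fin 2) (↥Tᶜ → Fin 2) ℂ))))‖ / (2 ^ n : ℝ))},
      Real.sqrt (1 - N / (2 ^ n : ℝ)) ≤ r := by
    rintro r ⟨V, hVu, rfl⟩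
    apply Real.sqrt_le_sqrt
    rw [trace_kron, ← hA]
    have h := hub V hVu
    have h2 : (0 : ℝ) < (2 : ℝ) ^ n := by positivity
    gcongr
  exact le_antisymm (csInf_le ⟨_, hlb⟩ hmem) (le_csInf ⟨_, hmem⟩ hlb)
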